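/- arXiv:1701.07185 — 7 statements merged into one kernel-verified Lean document; each statement's English description precedes it below -/
import Mathlib

section
/- If an ordered semigroup S is a nil extension of a group like ordered semigroup G (an ideal of S), then for all a, b ∈ S there exist n ∈ ℕ and x ∈ S such that a^n ≤ b^n · x · b^n. -/
/-- `spow a n` is the semigroup power `a^(n+1)` (exponents in a semigroup are ≥ 1). -/
def spow {S : Type*} [Semigroup S] (a : S) : ℕ → S
  | 0 => a
  | n + 1 => spow a n * a

/-- ordered-regular elements: `a ≤ a * x * a` for some `x`. -/
def RegLe (S : Type*) [Semigroup S] [PartialOrder S] : Set S :=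
  {a | ∃ x : S, a ≤ a * x * a}

/-- `I` is an ideal of the ordered semigroup `S`. -/
def IsIdeal {S : Type*} [Semigroup S] [PartialOrder S] (I : Set S) : Prop :=
  I.Nonempty ∧ (∀ s : S, ∀ a ∈ I, s * a ∈ I) ∧ (∀ a ∈ I, ∀ s : S, a * s ∈ I) ∧
    (∀ t : S, ∀ a ∈ I, t ≤ a → t ∈ I)

/-- `K` is left group like: for all `u v ∈ K` there is `x ∈ K` with `u ≤ x * v`. -/
def LeftGroupLike {S : Type*} [Semigroup S] [PartialOrder S] (K : Set S) : Prop :=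
  ∀ u ∈ K, ∀ v ∈ K, ∃ x ∈ K, u ≤ x * v

/-- `K` is group like. -/
def OrdGroupLike {S : Type*} [Semigroup S] [PartialOrder S] (K : Set S) : Prop :=
  ∀ u ∈ K, ∀ v ∈ K, (∃ x ∈ K, u ≤ x * v) ∧ (∃ y ∈ K, u ≤ v * y)

/-- `K` is a regular ordered subsemigroup. -/
def RegularOn {S : Type*} [Semigroup S] [PartialOrder S] (K : Set S) : Prop :=
  ∀ u ∈ K, ∃ x ∈ K, u ≤ u * x * u

/-- `K` is a Clifford ordered semigroup: regular and `uv ∈ (vKu]`. -/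
def CliffordOn {S : Type*} [Semigroup S] [PartialOrder S] (K : Set S) : Prop :=
  RegularOn K ∧ ∀ u ∈ K, ∀ v ∈ K, ∃ w ∈ K, u * v ≤ v * w * u

/-- `K` is a left Clifford ordered semigroup: regular and `uv ∈ (Ku]`. -/
def LeftCliffordOn {S : Type*} [Semigroup S] [PartialOrder S] (K : Set S) : Prop :=
  RegularOn K ∧ ∀ u ∈ K, ∀ v ∈ K, ∃ w ∈ K, u * v ≤ w * u

/-- `S` is a nil extension of the ideal `K`: every element has a power in `K`. -/
def NilExtOf {S : Type*} [Semigroup S] [PartialOrder S] (K : Set S) : Prop :=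
  IsIdeal K ∧ ∀ a : S, ∃ n : ℕ, spow a n ∈ K

variable {S : Type*} [Semigroup S] [PartialOrder S]
  [CovariantClass S S (· * ·) (· ≤ ·)]
  [CovariantClass S S (Function.swap (· * ·)) (· ≤ ·)]

theorem stmt4 (G : Set S) (hI : IsIdeal G) (hG : OrdGroupLike G)
    (hnil : ∀ a : S, ∃ m : ℕ, spow a m ∈ G) :
    ∀ a b : S, ∃ n : ℕ, ∃ x : S, spow a n ≤ spow b n * x * spow b n := by
  intro a b
  obtain ⟨m, hm⟩ := hnil a
  obtain ⟨k, hk⟩ := hnil b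
  have key : ∀ (c : S) (p : ℕ), spow c p ∈ G → ∀ q, p ≤ q → spow c q ∈ G := by
    intro c p hp q hq
    induction q, hq using Nat.le_induction with
    | base => exact hp
    | succ n _ ih => exact hI.2.2.1 _ ih c
  set n := max m k with hn
  have ha : spow a n ∈ G := key a m hm n (le_max_left m k)
  have hb : spow b n ∈ G := key b k hk n (le_max_right m k)
  obtain ⟨y, hy, hay⟩ := (hG _ ha _ hb).2
  obtain ⟨x, hx, hyx⟩ := (hG _ hy _ hb).1
  refine ⟨n, x, ?_⟩
  calc spow a n ≤ spow b n * y := hay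
    _ ≤ spow b n * (x * spow b n) := mul_le_mul_right hyx _
    _ = spow b n * x * spow b n := (mul_assoc _ _ _).symm
end

section
/- Suppose the ordered semigroup S satisfies: for all a, b ∈ S there exists n ∈ ℕ with a^n ∈ (b^n S b^n]. Then the set T = Reg≤(S) is a group like ordered semigroup: for all a, b ∈ T there exist u, v ∈ T with a ≤ bu and a ≤ vb. -/
/-- `K` is group like. -/
def GroupLike' {S : Type*} [Semigroup S] [PartialOrder S] (K : Set S) : Prop :=
  ∀ u ∈ K, ∀ v ∈ K, (∃ x ∈ K, u ≤ x * v) ∧ (∃ y ∈ K, u ≤ v * y)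

variable {S : Type*} [Semigroup S] [PartialOrder S]
  [CovariantClass S S (· * ·) (· ≤ ·)]
  [CovariantClass S S (Function.swap (· * ·)) (· ≤ ·)]

lemma spow_comm' (a : S) : ∀ n, a * spow a n = spow a n * a
  | 0 => rfl
  | n + 1 => by
    show a * (spow a n * a) = spow a n * a * a
    rw [← mul_assoc, spow_comm' a n]

lemma spow_succ' (a : S) (n : ℕ) : spow a (n + 1) = a * spow a n := by
  show spow a n * a = _
  rw [spow_comm']

lemma exists_head (b : S) : ∀ n (t : S), ∃ w, spow b n * t = b * w ∧ (w = t ∨ ∃ c, w = c * t)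
  | 0, t => ⟨t, rfl, Or.inl rfl⟩
  | n + 1, t => ⟨spow b n * t, by rw [spow_succ', mul_assoc], Or.inr ⟨spow b n, rfl⟩⟩

lemma exists_tail (b : S) : ∀ n (t : S), ∃ w, t * spow b n = w * b
  | 0, t => ⟨t, rfl⟩
  | n + 1, t => ⟨t * spow b n, by show t * (spow b n * b) = _; rw [mul_assoc]⟩

lemma le_spow_left {a x : S} (hx : a ≤ a * x * a) : ∀ n, a ≤ spow (a * x) n * a
  | 0 => hx
  | n + 1 => calc
      a ≤ a * x * a := hx
      _ ≤ a * x * (spow (a * x) n * a) := by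
          exact mul_le_mul_right (le_spow_left hx n) _
      _ = spow (a * x) (n + 1) * a := by
          rw [spow_succ', ← mul_assoc, mul_assoc (a*x)]

lemma le_spow_right {a x : S} (hx : a ≤ a * x * a) : ∀ n, a ≤ a * spow (x * a) n
  | 0 => by rw [show a * spow (x*a) 0 = a * x * a from (mul_assoc a x a).symm]; exact hx
  | n + 1 => calc
      a ≤ a * x * a := hx
      _ ≤ a * x * (a * spow (x * a) n) := mul_le_mul_right (le_spow_right hx n) _
      _ = a * spow (x * a) (n + 1) := by
          rw [spow_succ', mul_assoc, ← mul_assoc x a, ← mul_assoc]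

lemma regle_mul_left
    (h : ∀ a b : S, ∃ n : ℕ, ∃ x : S, spow a n ≤ spow b n * x * spow b n)
    (s : S) {a : S} (ha : a ∈ RegLe S) : s * a ∈ RegLe S := by
  obtain ⟨x, hx⟩ := ha
  obtain ⟨n, z, hz⟩ := h (x * a) (s * a)
  obtain ⟨w, hw⟩ := exists_tail (s * a) n (spow (s * a) n * z)
  refine ⟨w, ?_⟩
  calc s * a ≤ s * (a * spow (x * a) n) := mul_le_mul_right (le_spow_right hx n) _
    _ = (s * a) * spow (x * a) n := by rw [mul_assoc]
    _ ≤ (s * a) * (spow (s * a) n * z * spow (s * a) n) := mul_le_mul_right hz _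
    _ = (s * a) * (w * (s * a)) := by rw [hw]
    _ = (s * a) * w * (s * a) := (mul_assoc _ _ _).symm

lemma regle_mul_right
    (h : ∀ a b : S, ∃ n : ℕ, ∃ x : S, spow a n ≤ spow b n * x * spow b n)
    {a : S} (ha : a ∈ RegLe S) (s : S) : a * s ∈ RegLe S := by
  obtain ⟨x, hx⟩ := ha
  obtain ⟨n, z, hz⟩ := h (a * x) (a * s)
  obtain ⟨w, hw, _⟩ := exists_head (a * s) n (z * spow (a * s) n)
  refine ⟨w, ?_⟩
  calc a * s ≤ (spow (a * x) n * a) * s := mul_le_mul_left (le_spow_left hx n) _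
    _ = spow (a * x) n * (a * s) := by rw [mul_assoc]
    _ ≤ (spow (a * s) n * z * spow (a * s) n) * (a * s) := mul_le_mul_left hz _
    _ = ((a * s) * w) * (a * s) := by rw [mul_assoc _ z, hw]

theorem stmt7
    (h : ∀ a b : S, ∃ n : ℕ, ∃ x : S, spow a n ≤ spow b n * x * spow b n) :
    ∀ a ∈ RegLe S, ∀ b ∈ RegLe S,
      (∃ u ∈ RegLe S, a ≤ b * u) ∧ (∃ v ∈ RegLe S, a ≤ v * b) := by
  intro a ha b hb
  obtain ⟨x, hx⟩ := ha
  have ha' : a ∈ RegLe S := ⟨x, hx⟩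
  constructor
  · obtain ⟨n, y, hy⟩ := h (a * x) b
    obtain ⟨w, hw, hcase⟩ := exists_head b n (y * spow b n * a)
    have hwreg : w ∈ RegLe S := by
      rcases hcase with rfl | ⟨c, rfl⟩
      · exact regle_mul_left h (y * spow b n) ha'
      · have : c * (y * spow b n * a) = (c * (y * spow b n)) * a :=
          (mul_assoc c (y * spow b n) a).symm
        rw [this]
        exact regle_mul_left h _ ha'
    refine ⟨w, hwreg, ?_⟩
    calc a ≤ spow (a * x) n * a := le_spow_left hx n
      _ ≤ (spow b n * y * spow b n) * a := mul_le_mul_left hy _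
      _ = spow b n * (y * spow b n * a) := by simp only [mul_assoc]
      _ = b * w := hw
  · obtain ⟨n, y, hy⟩ := h (x * a) b
    obtain ⟨w, hw⟩ := exists_tail b n (spow b n * y)
    refine ⟨a * w, regle_mul_right h ha' w, ?_⟩
    calc a ≤ a * spow (x * a) n := le_spow_right hx n
      _ ≤ a * (spow b n * y * spow b n) := mul_le_mul_right hy _
      _ = a * (w * b) := by rw [hw]
      _ = (a * w) * b := by rw [mul_assoc]
end

section
/- If an ordered semigroup S is a nil extension of a Clifford ordered semigroup K, then for all x, a, y ∈ S there exist n ∈ ℕ and s, t ∈ S such that x a^n y ≤ x a^n y · s · y a^n x and x a^n y ≤ y a^n x · t · x a^n y. -/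
/-- `K` is group like. -/
def GroupLikeOn {S : Type*} [Semigroup S] [PartialOrder S] (K : Set S) : Prop :=
  ∀ u ∈ K, ∀ v ∈ K, (∃ x ∈ K, u ≤ x * v) ∧ (∃ y ∈ K, u ≤ v * y)

variable {S : Type*} [Semigroup S] [PartialOrder S]
  [CovariantClass S S (· * ·) (· ≤ ·)]
  [CovariantClass S S (Function.swap (· * ·)) (· ≤ ·)]

theorem stmt8 (K : Set S) (hI : IsIdeal K) (hC : CliffordOn K)
    (hnil : ∀ a : S, ∃ m : ℕ, spow a m ∈ K) :
    ∀ x a y : S, ∃ n : ℕ, ∃ s t : S,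
      x * spow a n * y ≤ x * spow a n * y * s * (y * spow a n * x) ∧
      x * spow a n * y ≤ y * spow a n * x * t * (x * spow a n * y) := by
  obtain ⟨-, hl, hr, -⟩ := hI
  obtain ⟨hreg, hcf⟩ := hC
  intro x a y
  obtain ⟨m, hg⟩ := hnil a
  set g := spow a m with hgdef
  have hu : x * g * y ∈ K := hr _ (hl x g hg) y
  obtain ⟨z, hz, huz⟩ := hreg _ hu
  have hB1a : z * (x * (g * y)) ∈ K := hr _ hz _
  have hB2a : z * x ∈ K := hr _ hz x
  obtain ⟨w1, hw1, hs1⟩ := hcf _ hB1a _ hB2a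
  have hB1b : g * (y * g) ∈ K := hr _ hg _
  have hB2b : y * z ∈ K := hl y z hz
  obtain ⟨w2, hw2, hs2⟩ := hcf _ hB1b _ hB2b
  have hB1c : g * (y * (g * x)) ∈ K := hr _ hg _
  have hB2c : g * y ∈ K := hr _ hg y
  obtain ⟨w3, hw3, hs3⟩ := hcf _ hB1c _ hB2c
  have hB1d : ((x*(g*(y*(z*(x*(w1*(z*(x*(y*(z*w2)))))))))) * g) ∈ K := hl _ g hg
  have hB2d : y * (g * (x * (g * y))) ∈ K := hl y _ (hr _ hg _)
  obtain ⟨w4, hw4, hs4⟩ := hcf _ hB1d _ hB2d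
  refine ⟨m, (z*(x*(w1*(z*(x*(y*(z*(w2*(g*(y*(w3*g))))))))))), (g*(y*(w4*(x*(g*(y*(z*(x*(w1*(z*(x*(y*(z*(w2*(g*z))))))))))))))), ?_, ?_⟩
  · rw [← hgdef]
    calc x * g * y ≤ x*g*y*z*(x*g*y) := huz
      _ ≤ x*g*y*z*(x*g*y*z*(x*g*y)) := mul_le_mul_right huz (x*g*y*z)
      _ ≤ x*g*y*z*(x*g*y*z*(x*g*y*z*(x*g*y))) :=
          mul_le_mul_right (mul_le_mul_right huz (x*g*y*z)) (x*g*y*z)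
      _ ≤ (x*g*y)*(((z*x)*w1*(z*(x*(g*y))))*(g*(y*(z*(x*(g*y)))))) := by
          simpa only [mul_assoc] using
            mul_le_mul_right (mul_le_mul_left hs1 (g*(y*(z*(x*(g*y)))))) (x*g*y)
      _ ≤ (x*(g*(y*(z*(x*(w1*(z*x)))))))*(((y*z)*w2*(g*(y*g)))*(x*(g*y))) := by
          simpa only [mul_assoc] using
            mul_le_mul_right (mul_le_mul_left hs2 (x*(g*y))) (x*(g*(y*(z*(x*(w1*(z*x)))))))
      _ ≤ x*g*y*(z*(x*(w1*(z*(x*(y*(z*(w2*(g*(y*(w3*g)))))))))))*(y*g*x) := by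
          simpa only [mul_assoc] using mul_le_mul_right hs3 (x*(g*(y*(z*(x*(w1*(z*(x*(y*(z*w2))))))))))
  · rw [← hgdef]
    calc x * g * y ≤ x*g*y*z*(x*g*y) := huz
      _ ≤ x*g*y*z*(x*g*y*z*(x*g*y)) := mul_le_mul_right huz (x*g*y*z)
      _ ≤ x*g*y*z*(x*g*y*z*(x*g*y*z*(x*g*y))) :=
          mul_le_mul_right (mul_le_mul_right huz (x*g*y*z)) (x*g*y*z)
      _ ≤ x*g*y*z*(x*g*y*z*(x*g*y*z*(x*g*y*z*(x*g*y)))) :=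
          mul_le_mul_right (mul_le_mul_right (mul_le_mul_right huz (x*g*y*z)) (x*g*y*z)) (x*g*y*z)
      _ ≤ (x*g*y)*(((z*x)*w1*(z*(x*(g*y))))*(g*(y*(z*(x*(g*(y*(z*(x*(g*y)))))))))) := by
          simpa only [mul_assoc] using
            mul_le_mul_right (mul_le_mul_left hs1 (g*(y*(z*(x*(g*(y*(z*(x*(g*y)))))))))) (x*g*y)
      _ ≤ (x*(g*(y*(z*(x*(w1*(z*x)))))))*(((y*z)*w2*(g*(y*g)))*(x*(g*(y*(z*(x*(g*y))))))) := by
          simpa only [mul_assoc] using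
            mul_le_mul_right (mul_le_mul_left hs2 (x*(g*(y*(z*(x*(g*y))))))) (x*(g*(y*(z*(x*(w1*(z*x)))))))
      _ ≤ y*g*x*(g*(y*(w4*(x*(g*(y*(z*(x*(w1*(z*(x*(y*(z*(w2*(g*z)))))))))))))))*(x*g*y) := by
          simpa only [mul_assoc] using mul_le_mul_left hs4 (z*(x*(g*y)))
end

section
/- Suppose the ordered semigroup S satisfies: for all x, a, y ∈ S there exists n ∈ ℕ with x a^n y ∈ (x a^n y S y a^n x] ∩ (y a^n x S x a^n y]. Then T = Reg≤(S) is a Clifford ordered semigroup: for all a, b ∈ T there exists u ∈ T with ab ≤ b u a. -/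
variable {S : Type*} [Semigroup S] [PartialOrder S]
  [CovariantClass S S (· * ·) (· ≤ ·)]
  [CovariantClass S S (Function.swap (· * ·)) (· ≤ ·)]

lemma spow_succ_left {S : Type*} [Semigroup S] (c : S) : ∀ n, spow c (n + 1) = c * spow c n := by
  intro n
  induction n with
  | zero => rfl
  | succ k ih =>
      rw [show spow c (k + 2) = spow c (k + 1) * c from rfl, ih, mul_assoc]
      exact congrArg (c * ·) ih

lemma spow_add {S : Type*} [Semigroup S] (c : S) (i : ℕ) :
    ∀ j, spow c i * spow c j = spow c (i + j + 1) := by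
  intro j
  induction j with
  | zero => rfl
  | succ k ih =>
      rw [show spow c (k + 1) = spow c k * c from rfl, ← mul_assoc, ih]
      rfl

lemma spow_spow {S : Type*} [Semigroup S] (c : S) (m : ℕ) :
    ∀ n, spow (spow c m) n = spow c (m + n * (m + 1)) := by
  intro n
  induction n with
  | zero => rw [Nat.zero_mul, Nat.add_zero]; rfl
  | succ k ih =>
      rw [show spow (spow c m) (k + 1) = spow (spow c m) k * spow c m from rfl, ih,
        spow_add]
      congr 1
      ring

lemma spow_le_succ {S : Type*} [Semigroup S] [PartialOrder S]
    [CovariantClass S S (Function.swap (· * ·)) (· ≤ ·)]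
    {c : S} (hcc : c ≤ c * c) : ∀ n, spow c n ≤ spow c (n + 1) := by
  intro n
  induction n with
  | zero => exact hcc
  | succ k ih => exact mul_le_mul_left ih c

lemma spow_le_add {S : Type*} [Semigroup S] [PartialOrder S]
    [CovariantClass S S (Function.swap (· * ·)) (· ≤ ·)]
    {c : S} (hcc : c ≤ c * c) (i : ℕ) : ∀ k, spow c i ≤ spow c (i + k) := by
  intro k
  induction k with
  | zero => exact le_refl _
  | succ k ih => exact ih.trans (spow_le_succ hcc (i + k))

theorem stmt11
    (h : ∀ x a y : S, ∃ n : ℕ,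
      (∃ s : S, x * spow a n * y ≤ x * spow a n * y * s * (y * spow a n * x)) ∧
      (∃ t : S, x * spow a n * y ≤ y * spow a n * x * t * (x * spow a n * y))) :
    ∀ a ∈ RegLe S, ∀ b ∈ RegLe S, ∃ u ∈ RegLe S, a * b ≤ b * u * a := by
  rintro a ⟨x, hax⟩ b ⟨y, hby⟩
  -- basic facts about c := x * a
  have hcc : x * a ≤ (x * a) * (x * a) := by
    have h1 := mul_le_mul_right hax x
    simpa only [mul_assoc] using h1
  obtain ⟨n₁, ⟨s, hs⟩, ⟨t, ht⟩⟩ := h a (x * a) b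
  obtain ⟨n₂, ⟨s₂, hs₂⟩, -⟩ := h b (spow (x * a) n₁) a
  rw [spow_spow] at hs₂
  -- a ≤ a * (x*a)^n
  have haspow : ∀ n, a ≤ a * spow (x * a) n := by
    intro n
    induction n with
    | zero =>
        show a ≤ a * (x * a)
        simpa only [mul_assoc] using hax
    | succ n ih =>
        have h0 : a ≤ a * (x * a) := by simpa only [mul_assoc] using hax
        have h1 : a * (x * a) ≤ a * spow (x * a) n * (x * a) :=
          mul_le_mul_left ih (x * a)
        show a ≤ a * (spow (x * a) n * (x * a))
        exact h0.trans (by simpa only [mul_assoc] using h1)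
  -- key absorption: extra powers can be pulled out on the left
  have haux : ∀ k, a * spow (x * a) (n₁ + k) * b
      ≤ spow (a * x) k * (a * spow (x * a) n₁ * b) := by
    intro k
    induction k with
    | zero =>
        show a * spow (x * a) n₁ * b ≤ (a * x) * (a * spow (x * a) n₁ * b)
        have h1 : a * (spow (x * a) n₁ * b) ≤ (a * x * a) * (spow (x * a) n₁ * b) :=
          mul_le_mul_left hax _
        simpa only [mul_assoc] using h1
    | succ k ih =>
        have e1 : a * spow (x * a) (n₁ + (k + 1)) * b
            = (a * x) * (a * spow (x * a) (n₁ + k) * b) := by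
          rw [show n₁ + (k + 1) = (n₁ + k) + 1 from rfl, spow_succ_left]
          simp only [mul_assoc]
        rw [e1]
        have h2 := mul_le_mul_right ih (a * x)
        refine h2.trans (le_of_eq ?_)
        rw [spow_succ_left]
        simp only [mul_assoc]
  set N := n₁ + n₂ * (n₁ + 1) with hN
  have hmono : spow (x * a) n₁ ≤ spow (x * a) N := by
    rw [hN]; exact spow_le_add hcc n₁ _
  have ham : a ≤ a * spow (x * a) n₁ := haspow n₁
  have hPd : a * spow (x * a) N * b
      ≤ spow (a * x) (n₂ * (n₁ + 1)) * (a * spow (x * a) n₁ * b) := by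
    rw [hN]; exact haux _
  set m := spow (x * a) n₁ with hm
  set C := spow (x * a) N with hC
  set δ := spow (a * x) (n₂ * (n₁ + 1)) with hδ
  set p := a * m * b with hp
  set q := b * m * a with hq
  set P := a * C * b with hP
  set Q := b * C * a with hQ
  -- now: hs : p ≤ p * s * q, ht : p ≤ q * t * p, hs₂ : Q ≤ Q * s₂ * P, hPd : P ≤ δ * p
  have hqQ : q ≤ Q := by
    rw [hq, hQ]
    exact mul_le_mul_left (mul_le_mul_right hmono b) a
  have hpsQ : p ≤ p * s * Q := hs.trans (mul_le_mul_right hqQ (p * s))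
  have hQtp : p ≤ Q * t * p :=
    ht.trans (mul_le_mul_left (mul_le_mul_left hqQ t) p)
  have hpWp : p ≤ p * (s * (Q * (s₂ * δ))) * p := by
    calc p ≤ p * s * Q := hpsQ
      _ ≤ p * s * (Q * s₂ * P) := mul_le_mul_right hs₂ (p * s)
      _ ≤ p * s * (Q * s₂ * (δ * p)) :=
          mul_le_mul_right (mul_le_mul_right hPd (Q * s₂)) (p * s)
      _ = p * (s * (Q * (s₂ * δ))) * p := by simp only [mul_assoc]
  refine ⟨C * a * t * p * s * (b * C),
    ⟨a * (s * (Q * (s₂ * δ))) * b, ?_⟩, ?_⟩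
  · -- regularity of u
    have W := s * (Q * (s₂ * δ))
    calc C * a * t * p * s * (b * C)
        ≤ C * a * t * (p * (s * (Q * (s₂ * δ))) * p) * s * (b * C) :=
          mul_le_mul_left (mul_le_mul_left
            (mul_le_mul_right hpWp (C * a * t)) s) (b * C)
      _ ≤ C * a * t * ((p * s * Q) * (s * (Q * (s₂ * δ))) * p) * s * (b * C) :=
          mul_le_mul_left (mul_le_mul_left (mul_le_mul_right
            (mul_le_mul_left (mul_le_mul_left hpsQ _) p) (C * a * t)) s) (b * C)
      _ ≤ C * a * t * ((p * s * Q) * (s * (Q * (s₂ * δ))) * (Q * t * p)) * s * (b * C) :=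
          mul_le_mul_left (mul_le_mul_left (mul_le_mul_right
            (mul_le_mul_right hQtp _) (C * a * t)) s) (b * C)
      _ = C * a * t * p * s * (b * C) * (a * (s * (Q * (s₂ * δ))) * b) *
            (C * a * t * p * s * (b * C)) := by
          simp only [hQ, mul_assoc]
  · -- main chain
    calc a * b ≤ p := by rw [hp]; exact mul_le_mul_left ham b
      _ ≤ Q * t * p := hQtp
      _ ≤ Q * t * (p * s * Q) := mul_le_mul_right hpsQ (Q * t)
      _ = b * (C * a * t * p * s * (b * C)) * a := by simp only [hQ, mul_assoc]
end

section
/- If an ordered semigroup S is a nil extension of a left Clifford ordered semigroup K, then for all x, a, y ∈ S there exist n ∈ ℕ and s, t ∈ S such that x a^n y ≤ x a^n y · s · y a^n x and x a^n y ≤ x a^n y · t · x a^n y. -/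
variable {S : Type*} [Semigroup S] [PartialOrder S]
  [CovariantClass S S (· * ·) (· ≤ ·)]
  [CovariantClass S S (Function.swap (· * ·)) (· ≤ ·)]

theorem stmt12 (K : Set S) (hI : IsIdeal K) (hC : LeftCliffordOn K)
    (hnil : ∀ a : S, ∃ m : ℕ, spow a m ∈ K) :
    ∀ x a y : S, ∃ n : ℕ, ∃ s t : S,
      x * spow a n * y ≤ x * spow a n * y * s * (y * spow a n * x) ∧
      x * spow a n * y ≤ x * spow a n * y * t * (x * spow a n * y) := by
  intro x a y
  obtain ⟨m, hb⟩ := hnil a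
  obtain ⟨hne, hL, hR, hD⟩ := hI
  obtain ⟨hreg, hlc⟩ := hC
  refine ⟨m, ?_⟩
  set b := spow a m with hbdef
  have hxb : x * b ∈ K := hL x b hb
  have hby : b * y ∈ K := hR b hb y
  have hu : x * b * y ∈ K := hR _ hxb y
  obtain ⟨c, hc, h1⟩ := hreg _ hu
  have hcx : c * x ∈ K := hR c hc x
  have hyb : y * b ∈ K := hL y b hb
  have hyc : y * c ∈ K := hL y c hc
  have hybx : y * b * x ∈ K := hR _ hyb x
  obtain ⟨w1, hw1, e1⟩ := hlc _ hby _ hcx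
  obtain ⟨w2, hw2, e2⟩ := hlc _ hyb _ hyc
  obtain ⟨w3, hw3, e3⟩ := hlc _ hybx _ hby
  refine ⟨c * x * w1 * b * w2 * w3, c, ?_, h1⟩
  set u := x * b * y with hudef
  calc u ≤ u * c * u := h1
    _ ≤ u * c * (u * c * u) := mul_le_mul' le_rfl h1
    _ ≤ u * c * (u * c * (u * c * u)) :=
        mul_le_mul' le_rfl (mul_le_mul' le_rfl h1)
    _ = (u * c * x) * (((b * y) * (c * x)) * (b * (y * (c * (x * (b * y)))))) := by
        simp only [hudef, mul_assoc]
    _ ≤ (u * c * x) * ((w1 * (b * y)) * (b * (y * (c * (x * (b * y)))))) :=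
        mul_le_mul' le_rfl (mul_le_mul' e1 le_rfl)
    _ = (u * c * x * w1 * b) * (((y * b) * (y * c)) * (x * (b * y))) := by
        simp only [mul_assoc]
    _ ≤ (u * c * x * w1 * b) * ((w2 * (y * b)) * (x * (b * y))) :=
        mul_le_mul' le_rfl (mul_le_mul' e2 le_rfl)
    _ = (u * c * x * w1 * b * w2) * (((y * b) * x) * (b * y)) := by
        simp only [mul_assoc]
    _ ≤ (u * c * x * w1 * b * w2) * (w3 * ((y * b) * x)) :=
        mul_le_mul' le_rfl e3
    _ = u * (c * x * w1 * b * w2 * w3) * (y * b * x) := by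
        simp only [mul_assoc]
end

section
/- Suppose the ordered semigroup S satisfies: for all x, a, y ∈ S there exists n ∈ ℕ with x a^n y ∈ (x a^n y S y a^n x] ∩ (x a^n y S x a^n y]. Then for all a, b ∈ Reg≤(S) there exists t ∈ Reg≤(S) with ab ≤ t a (i.e., Reg≤(S) is left Clifford). -/
variable {S : Type*} [Semigroup S] [PartialOrder S]
  [CovariantClass S S (· * ·) (· ≤ ·)]
  [CovariantClass S S (Function.swap (· * ·)) (· ≤ ·)]

lemma le_mul_spow_aux {a x : S} (hax : a ≤ a * x * a) :
    ∀ n, a ≤ a * spow (x * a) n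
  | 0 => by simpa [spow, mul_assoc] using hax
  | n + 1 => by
      calc a ≤ a * (x * a) := by simpa [mul_assoc] using hax
        _ ≤ a * spow (x * a) n * (x * a) :=
            mul_le_mul_left (le_mul_spow_aux hax n) _
        _ = a * spow (x * a) (n + 1) := by rw [spow, mul_assoc]

theorem stmt15
    (h : ∀ x a y : S, ∃ n : ℕ,
      (∃ s : S, x * spow a n * y ≤ x * spow a n * y * s * (y * spow a n * x)) ∧
      (∃ t : S, x * spow a n * y ≤ x * spow a n * y * t * (x * spow a n * y))) :
    ∀ a ∈ RegLe S, ∀ b ∈ RegLe S, ∃ t ∈ RegLe S, a * b ≤ t * a := by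
  rintro a ⟨x, hax⟩ b _
  obtain ⟨n, ⟨s, hs⟩, ⟨u, hu⟩⟩ := h a (x * a) b
  set p := spow (x * a) n with hp
  set c := a * p * b with hc
  set t := c * s * (b * p) with ht
  have hab : a * b ≤ c := mul_le_mul_left (le_mul_spow_aux hax n) b
  have habta : a * b ≤ t * a := by
    calc a * b ≤ c := hab
      _ ≤ c * s * (b * p * a) := hs
      _ = t * a := by rw [ht]; simp only [mul_assoc]
  refine ⟨t, ⟨a * u, ?_⟩, habta⟩
  have h1 : t ≤ c * u * t := by
    calc t = c * (s * (b * p)) := by rw [ht, mul_assoc]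
      _ ≤ c * u * c * (s * (b * p)) := mul_le_mul_left hu _
      _ = c * u * t := by rw [ht]; simp only [mul_assoc]
  have h2 : c * u ≤ t * (a * u) := by
    calc c * u ≤ c * s * (b * p * a) * u := mul_le_mul_left hs _
      _ = t * (a * u) := by rw [ht]; simp only [mul_assoc]
  calc t ≤ c * u * t := h1
    _ ≤ t * (a * u) * t := mul_le_mul_left h2 _
end

section
/- Let S be an ordered semigroup and K ⊆ S a left group like ideal (for all u, v ∈ K there exists x ∈ K with u ≤ xv). If S is a nil extension of K and b ∈ Reg≤(S), then b ∈ K. -/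
variable {S : Type*} [Semigroup S] [PartialOrder S]
  [CovariantClass S S (· * ·) (· ≤ ·)]
  [CovariantClass S S (Function.swap (· * ·)) (· ≤ ·)]

theorem stmt17 (K : Set S) (hI : IsIdeal K) (hL : LeftGroupLike K)
    (hnil : ∀ a : S, ∃ m : ℕ, spow a m ∈ K) :
    ∀ b ∈ RegLe S, b ∈ K := by
  rintro b ⟨z, hz⟩
  have key : ∀ n : ℕ, b ≤ b * spow (z * b) n := by
    intro n
    induction n with
    | zero => simpa [spow, mul_assoc] using hz
    | succ n ih =>
      calc b ≤ b * z * b := hz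
        _ ≤ (b * spow (z * b) n) * z * b := by
            exact mul_le_mul_left (mul_le_mul_left ih z) b
        _ = b * (spow (z * b) n * (z * b)) := by simp [mul_assoc]
        _ = b * spow (z * b) (n + 1) := rfl
  obtain ⟨m, hm⟩ := hnil (z * b)
  exact hI.2.2.2 b _ (hI.2.1 b _ hm) (key m)
end
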